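/- arXiv:0911.3040 — 7 statements merged into one kernel-verified Lean document; each statement's English description precedes it below -/
import Mathlib

section
/- Let A = (a_{ij}) (1 ≤ i,j ≤ 2) be a 2×2 integer matrix whose characteristic polynomial is irreducible over ℚ, and set Q_A(x,y) = (a₁₂x² + (a₂₂ − a₁₁)xy − a₂₁y²) / gcd(a₁₂, a₂₁, a₂₂ − a₁₁). Then A is of Frobenius type if and only if the equation |Q_A(x,y)| = 1 has an integer solution (x,y). -/
/-- The Frobenius matrix `M_{a₁,a₂}` with rows `(0,1)` and `(a₂,a₁)`. -/
def frobeniusMatrix2 (a₁ a₂ : ℤ) : Matrix (Fin 2) (Fin 2) ℤ :=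
  !![0, 1; a₂, a₁]

/-- A 2×2 integer matrix `A` is of Frobenius type if there exist integers `a₁, a₂`
and `X ∈ SL(2,ℤ)` such that `X A X⁻¹` commutes with `M_{a₁,a₂}`. -/
def IsFrobeniusType2 (A : Matrix (Fin 2) (Fin 2) ℤ) : Prop :=
  ∃ (a₁ a₂ : ℤ) (X : Matrix.SpecialLinearGroup (Fin 2) ℤ),
    Commute ((X : Matrix (Fin 2) (Fin 2) ℤ) * A * ((X⁻¹ : Matrix.SpecialLinearGroup (Fin 2) ℤ) : Matrix (Fin 2) (Fin 2) ℤ))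
      (frobeniusMatrix2 a₁ a₂)

/-- The form `Q_A(x,y) = (a₁₂x² + (a₂₂ − a₁₁)xy − a₂₁y²) / gcd(a₁₂, a₂₁, a₂₂ − a₁₁)`,
viewed with rational values. -/
def QForm (A : Matrix (Fin 2) (Fin 2) ℤ) (x y : ℤ) : ℚ :=
  ((A 0 1 : ℚ) * (x : ℚ) ^ 2 + ((A 1 1 : ℚ) - (A 0 0 : ℚ)) * (x : ℚ) * (y : ℚ)
      - (A 1 0 : ℚ) * (y : ℚ) ^ 2)
    / ((Int.gcd (A 0 1) (Int.gcd (A 1 0) (A 1 1 - A 0 0)) : ℤ) : ℚ)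

/-- The integral binary quadratic form attached to `A` (numerator of `QForm`). -/
def FForm (A : Matrix (Fin 2) (Fin 2) ℤ) (x y : ℤ) : ℤ :=
  A 0 1 * x ^ 2 + (A 1 1 - A 0 0) * (x * y) - A 1 0 * y ^ 2

lemma coe_inv_sl2 (X : Matrix.SpecialLinearGroup (Fin 2) ℤ) :
    ((X⁻¹ : Matrix.SpecialLinearGroup (Fin 2) ℤ) : Matrix (Fin 2) (Fin 2) ℤ) =
      !![(X : Matrix (Fin 2) (Fin 2) ℤ) 1 1, -(X : Matrix (Fin 2) (Fin 2) ℤ) 0 1;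
        -(X : Matrix (Fin 2) (Fin 2) ℤ) 1 0, (X : Matrix (Fin 2) (Fin 2) ℤ) 0 0] := by
  rw [Matrix.SpecialLinearGroup.coe_inv, Matrix.adjugate_fin_two]

lemma conj01 (A : Matrix (Fin 2) (Fin 2) ℤ) (X : Matrix.SpecialLinearGroup (Fin 2) ℤ) :
    ((X : Matrix (Fin 2) (Fin 2) ℤ) * A *
        ((X⁻¹ : Matrix.SpecialLinearGroup (Fin 2) ℤ) : Matrix (Fin 2) (Fin 2) ℤ)) 0 1
      = FForm A ((X : Matrix (Fin 2) (Fin 2) ℤ) 0 0) ((X : Matrix (Fin 2) (Fin 2) ℤ) 0 1) := by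
  rw [coe_inv_sl2]
  simp [Matrix.mul_apply, Fin.sum_univ_two, FForm]; ring

lemma conj10 (A : Matrix (Fin 2) (Fin 2) ℤ) (X : Matrix.SpecialLinearGroup (Fin 2) ℤ) :
    ((X : Matrix (Fin 2) (Fin 2) ℤ) * A *
        ((X⁻¹ : Matrix.SpecialLinearGroup (Fin 2) ℤ) : Matrix (Fin 2) (Fin 2) ℤ)) 1 0
      = -FForm A ((X : Matrix (Fin 2) (Fin 2) ℤ) 1 0) ((X : Matrix (Fin 2) (Fin 2) ℤ) 1 1) := by
  rw [coe_inv_sl2]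
  simp [Matrix.mul_apply, Fin.sum_univ_two, FForm]; ring

lemma conjdiag (A : Matrix (Fin 2) (Fin 2) ℤ) (X : Matrix.SpecialLinearGroup (Fin 2) ℤ) :
    ((X : Matrix (Fin 2) (Fin 2) ℤ) * A *
        ((X⁻¹ : Matrix.SpecialLinearGroup (Fin 2) ℤ) : Matrix (Fin 2) (Fin 2) ℤ)) 1 1
      - ((X : Matrix (Fin 2) (Fin 2) ℤ) * A *
        ((X⁻¹ : Matrix.SpecialLinearGroup (Fin 2) ℤ) : Matrix (Fin 2) (Fin 2) ℤ)) 0 0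
      = A 0 1 * (2 * ((X : Matrix (Fin 2) (Fin 2) ℤ) 0 0 * (X : Matrix (Fin 2) (Fin 2) ℤ) 1 0))
        + (A 1 1 - A 0 0) * ((X : Matrix (Fin 2) (Fin 2) ℤ) 0 0 * (X : Matrix (Fin 2) (Fin 2) ℤ) 1 1
            + (X : Matrix (Fin 2) (Fin 2) ℤ) 0 1 * (X : Matrix (Fin 2) (Fin 2) ℤ) 1 0)
        - A 1 0 * (2 * ((X : Matrix (Fin 2) (Fin 2) ℤ) 0 1 * (X : Matrix (Fin 2) (Fin 2) ℤ) 1 1)) := by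
  rw [coe_inv_sl2]
  simp [Matrix.mul_apply, Fin.sum_univ_two]; ring

lemma gcd_dvd_comb (A : Matrix (Fin 2) (Fin 2) ℤ) (u v w : ℤ) :
    (Int.gcd (A 0 1) (Int.gcd (A 1 0) (A 1 1 - A 0 0)) : ℤ) ∣
      A 0 1 * u + (A 1 1 - A 0 0) * v - A 1 0 * w := by
  have h1 : (Int.gcd (A 0 1) (Int.gcd (A 1 0) (A 1 1 - A 0 0)) : ℤ) ∣ A 0 1 :=
    Int.gcd_dvd_left _ _
  have h2 : (Int.gcd (A 0 1) (Int.gcd (A 1 0) (A 1 1 - A 0 0)) : ℤ) ∣ A 1 0 :=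
    dvd_trans (Int.gcd_dvd_right _ _) (Int.gcd_dvd_left _ _)
  have h3 : (Int.gcd (A 0 1) (Int.gcd (A 1 0) (A 1 1 - A 0 0)) : ℤ) ∣ (A 1 1 - A 0 0) :=
    dvd_trans (Int.gcd_dvd_right _ _) (Int.gcd_dvd_right _ _)
  exact dvd_sub (dvd_add (h1.mul_right u) (h3.mul_right v)) (h2.mul_right w)

lemma gcd_dvd_FForm (A : Matrix (Fin 2) (Fin 2) ℤ) (x y : ℤ) :
    (Int.gcd (A 0 1) (Int.gcd (A 1 0) (A 1 1 - A 0 0)) : ℤ) ∣ FForm A x y :=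
  gcd_dvd_comb A (x ^ 2) (x * y) (y ^ 2)

lemma gcd_dvd_conj (A : Matrix (Fin 2) (Fin 2) ℤ) (X : Matrix.SpecialLinearGroup (Fin 2) ℤ) :
    (Int.gcd (A 0 1) (Int.gcd (A 1 0) (A 1 1 - A 0 0)) : ℤ) ∣
      (Int.gcd (((X : Matrix (Fin 2) (Fin 2) ℤ) * A *
          ((X⁻¹ : Matrix.SpecialLinearGroup (Fin 2) ℤ) : Matrix (Fin 2) (Fin 2) ℤ)) 0 1)
        (Int.gcd (((X : Matrix (Fin 2) (Fin 2) ℤ) * A *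
          ((X⁻¹ : Matrix.SpecialLinearGroup (Fin 2) ℤ) : Matrix (Fin 2) (Fin 2) ℤ)) 1 0)
          ((((X : Matrix (Fin 2) (Fin 2) ℤ) * A *
          ((X⁻¹ : Matrix.SpecialLinearGroup (Fin 2) ℤ) : Matrix (Fin 2) (Fin 2) ℤ)) 1 1)
            - (((X : Matrix (Fin 2) (Fin 2) ℤ) * A *
          ((X⁻¹ : Matrix.SpecialLinearGroup (Fin 2) ℤ) : Matrix (Fin 2) (Fin 2) ℤ)) 0 0))) : ℤ) := by
  refine Int.dvd_coe_gcd ?_ (Int.dvd_coe_gcd ?_ ?_)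
  · rw [conj01]; exact gcd_dvd_FForm A _ _
  · rw [conj10]; exact (gcd_dvd_FForm A _ _).neg_right
  · rw [conjdiag]; exact gcd_dvd_comb A _ _ _

lemma conj_conj (A : Matrix (Fin 2) (Fin 2) ℤ) (X : Matrix.SpecialLinearGroup (Fin 2) ℤ) :
    ((X⁻¹ : Matrix.SpecialLinearGroup (Fin 2) ℤ) : Matrix (Fin 2) (Fin 2) ℤ) *
      ((X : Matrix (Fin 2) (Fin 2) ℤ) * A *
        ((X⁻¹ : Matrix.SpecialLinearGroup (Fin 2) ℤ) : Matrix (Fin 2) (Fin 2) ℤ)) *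
      (((X⁻¹)⁻¹ : Matrix.SpecialLinearGroup (Fin 2) ℤ) : Matrix (Fin 2) (Fin 2) ℤ) = A := by
  have hl : ((X⁻¹ : Matrix.SpecialLinearGroup (Fin 2) ℤ) : Matrix (Fin 2) (Fin 2) ℤ) *
      (X : Matrix (Fin 2) (Fin 2) ℤ) = 1 := by
    rw [Matrix.SpecialLinearGroup.coe_inv, Matrix.adjugate_mul, X.prop, one_smul]
  rw [inv_inv]
  rw [show ((X⁻¹ : Matrix.SpecialLinearGroup (Fin 2) ℤ) : Matrix (Fin 2) (Fin 2) ℤ) *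
      ((X : Matrix (Fin 2) (Fin 2) ℤ) * A *
        ((X⁻¹ : Matrix.SpecialLinearGroup (Fin 2) ℤ) : Matrix (Fin 2) (Fin 2) ℤ)) *
      (X : Matrix (Fin 2) (Fin 2) ℤ)
    = (((X⁻¹ : Matrix.SpecialLinearGroup (Fin 2) ℤ) : Matrix (Fin 2) (Fin 2) ℤ) *
        (X : Matrix (Fin 2) (Fin 2) ℤ)) * A *
      (((X⁻¹ : Matrix.SpecialLinearGroup (Fin 2) ℤ) : Matrix (Fin 2) (Fin 2) ℤ) *
        (X : Matrix (Fin 2) (Fin 2) ℤ)) from by noncomm_ring, hl, one_mul, mul_one]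

/-- A 2×2 integer matrix with irreducible characteristic polynomial over ℚ is of
Frobenius type iff `|Q_A(x,y)| = 1` has an integer solution. -/
theorem frobenius_type_iff_QForm_represents_one
    (A : Matrix (Fin 2) (Fin 2) ℤ)
    (hirr : Irreducible (A.charpoly.map (Int.castRingHom ℚ))) :
    IsFrobeniusType2 A ↔ ∃ x y : ℤ, |QForm A x y| = 1 := by
  set g : ℕ := Int.gcd (A 0 1) (Int.gcd (A 1 0) (A 1 1 - A 0 0)) with hg
  -- positivity of g
  have hgpos : 0 < g := by
    rcases Nat.eq_zero_or_pos g with h | h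
    swap
    · exact h
    exfalso
    rw [hg, Int.gcd_eq_zero_iff] at h
    obtain ⟨h01, h'⟩ := h
    have h'' : Int.gcd (A 1 0) (A 1 1 - A 0 0) = 0 := by exact_mod_cast h'
    rw [Int.gcd_eq_zero_iff] at h''
    obtain ⟨h10, hdiag⟩ := h''
    have hc : A.charpoly = (Polynomial.X - Polynomial.C (A 0 0)) ^ 2 := by
      rw [Matrix.charpoly, Matrix.det_fin_two, Matrix.charmatrix_apply_eq,
        Matrix.charmatrix_apply_eq, Matrix.charmatrix_apply_ne _ _ _ (by decide),
        Matrix.charmatrix_apply_ne _ _ _ (by decide), h01, h10,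
        show A 1 1 = A 0 0 from by linarith, Polynomial.C_0]
      ring
    have hmap : A.charpoly.map (Int.castRingHom ℚ)
        = (Polynomial.X - Polynomial.C ((Int.castRingHom ℚ) (A 0 0)))
          * (Polynomial.X - Polynomial.C ((Int.castRingHom ℚ) (A 0 0))) := by
      rw [hc, Polynomial.map_pow, Polynomial.map_sub, Polynomial.map_X, Polynomial.map_C, sq]
    exact Polynomial.not_isUnit_X_sub_C _ ((hirr.2 hmap).elim id id)
  have hgz : ((g : ℤ) : ℚ) ≠ 0 := by
    exact_mod_cast hgpos.ne'
  -- |QForm A x y| = 1 ↔ |FForm A x y| = g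
  have habs : ∀ x y : ℤ, |QForm A x y| = 1 ↔ |FForm A x y| = (g : ℤ) := by
    intro x y
    have hnum : QForm A x y = ((FForm A x y : ℤ) : ℚ) / ((g : ℤ) : ℚ) := by
      rw [QForm, ← hg]
      push_cast [FForm]
      ring_nf
    rw [hnum, abs_div, abs_of_pos (by exact_mod_cast hgpos : (0:ℚ) < ((g:ℤ):ℚ)),
      div_eq_one_iff_eq hgz]
    constructor
    · intro h; exact_mod_cast h
    · intro h; exact_mod_cast h
  constructor
  · -- Frobenius type → representation
    rintro ⟨a₁, a₂, X, hc⟩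
    have heq : _ * _ = _ * _ := hc
    have e00 : (((X : Matrix (Fin 2) (Fin 2) ℤ) * A *
        ((X⁻¹ : Matrix.SpecialLinearGroup (Fin 2) ℤ) : Matrix (Fin 2) (Fin 2) ℤ))
        * frobeniusMatrix2 a₁ a₂) 0 0
        = (frobeniusMatrix2 a₁ a₂ * ((X : Matrix (Fin 2) (Fin 2) ℤ) * A *
        ((X⁻¹ : Matrix.SpecialLinearGroup (Fin 2) ℤ) : Matrix (Fin 2) (Fin 2) ℤ))) 0 0 := by
      rw [heq]
    have e01 : (((X : Matrix (Fin 2) (Fin 2) ℤ) * A *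
        ((X⁻¹ : Matrix.SpecialLinearGroup (Fin 2) ℤ) : Matrix (Fin 2) (Fin 2) ℤ))
        * frobeniusMatrix2 a₁ a₂) 0 1
        = (frobeniusMatrix2 a₁ a₂ * ((X : Matrix (Fin 2) (Fin 2) ℤ) * A *
        ((X⁻¹ : Matrix.SpecialLinearGroup (Fin 2) ℤ) : Matrix (Fin 2) (Fin 2) ℤ))) 0 1 := by
      rw [heq]
    set B := (X : Matrix (Fin 2) (Fin 2) ℤ) * A *
        ((X⁻¹ : Matrix.SpecialLinearGroup (Fin 2) ℤ) : Matrix (Fin 2) (Fin 2) ℤ) with hB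
    simp [frobeniusMatrix2, Matrix.mul_apply, Fin.sum_univ_two] at e00 e01
    -- e00 : B 0 1 * a₂ = B 1 0 (or some normal form), e01 similar
    have hdvd10 : B 0 1 ∣ B 1 0 := ⟨a₂, by linarith⟩
    have hdvd11 : B 0 1 ∣ B 1 1 - B 0 0 := ⟨a₁, by linarith⟩
    have h1 : (g : ℤ) ∣ (Int.gcd (B 0 1) (Int.gcd (B 1 0) (B 1 1 - B 0 0)) : ℤ) := by
      rw [hg, hB]; exact gcd_dvd_conj A X
    have h2 : (Int.gcd (B 0 1) (Int.gcd (B 1 0) (B 1 1 - B 0 0)) : ℤ) ∣ (g : ℤ) := by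
      have hCA := conj_conj A X
      rw [← hB] at hCA
      have := gcd_dvd_conj B X⁻¹
      rw [hCA] at this
      rw [hg]; exact this
    have hBg : B 0 1 ∣ (g : ℤ) :=
      dvd_trans (Int.dvd_coe_gcd dvd_rfl (Int.dvd_coe_gcd hdvd10 hdvd11)) h2
    have hgB : (g : ℤ) ∣ B 0 1 := by
      rw [hB, conj01]; rw [hg]; exact gcd_dvd_FForm A _ _
    have habsB : |B 0 1| = (g : ℤ) :=
      Int.dvd_antisymm (abs_nonneg _) (Int.natCast_nonneg g)
        ((abs_dvd _ _).2 hBg) ((dvd_abs _ _).2 hgB)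
    refine ⟨(X : Matrix (Fin 2) (Fin 2) ℤ) 0 0, (X : Matrix (Fin 2) (Fin 2) ℤ) 0 1, ?_⟩
    rw [habs]
    rw [← conj01 A X, ← hB, habsB]
  · -- representation → Frobenius type
    rintro ⟨x, y, hQ⟩
    rw [habs] at hQ
    -- gcd(x,y) = 1
    set n : ℕ := Int.gcd x y with hn
    obtain ⟨x', hx⟩ : ((n : ℤ)) ∣ x := hn ▸ Int.gcd_dvd_left _ _
    obtain ⟨y', hy⟩ : ((n : ℤ)) ∣ y := hn ▸ Int.gcd_dvd_right _ _
    obtain ⟨m, hm⟩ := gcd_dvd_FForm A x' y'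
    have hFd : FForm A x y = ((n : ℤ))^2 * ((g:ℤ) * m) := by
      rw [FForm, hx, hy, show (g:ℤ) * m = FForm A x' y' from (hg ▸ hm).symm, FForm]
      ring
    have hd1 : n = 1 := by
      have h1 : ((n : ℤ))^2 * ((g:ℤ) * |m|) = (g : ℤ) := by
        conv_rhs => rw [← hQ]
        rw [hFd, abs_mul, abs_mul, abs_pow, Int.abs_natCast, Int.abs_natCast]
      have hg0 : (g : ℤ) ≠ 0 := by exact_mod_cast hgpos.ne'
      have h2 : ((n : ℤ))^2 * |m| = 1 := by
        rcases mul_eq_zero.mp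
          (show (g : ℤ) * (((n : ℤ))^2 * |m| - 1) = 0 by linear_combination h1) with h | h
        · exact absurd h hg0
        · linarith
      have h3 : ((n : ℤ)) ∣ 1 := ⟨(n : ℤ) * |m|, by linear_combination -h2⟩
      exact_mod_cast Int.eq_one_of_dvd_one (Int.natCast_nonneg _) h3
    obtain ⟨u, v, huv⟩ := Int.isCoprime_iff_gcd_eq_one.mpr hd1
    set X : Matrix.SpecialLinearGroup (Fin 2) ℤ :=
      ⟨!![x, y; -v, u], by rw [Matrix.det_fin_two]; simp; linarith⟩ with hX
    have hX00 : (X : Matrix (Fin 2) (Fin 2) ℤ) 0 0 = x := by rw [hX]; simp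
    have hX01 : (X : Matrix (Fin 2) (Fin 2) ℤ) 0 1 = y := by rw [hX]; simp
    set B := (X : Matrix (Fin 2) (Fin 2) ℤ) * A *
        ((X⁻¹ : Matrix.SpecialLinearGroup (Fin 2) ℤ) : Matrix (Fin 2) (Fin 2) ℤ) with hB
    have hB01 : B 0 1 = FForm A x y := by rw [hB, conj01, hX00, hX01]
    have habsB : |B 0 1| = (g : ℤ) := by rw [hB01, hQ]
    have hdvd10 : B 0 1 ∣ B 1 0 := by
      have hg10 : (g : ℤ) ∣ B 1 0 := by
        rw [hB, conj10, hg]; exact (gcd_dvd_FForm A _ _).neg_right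
      rw [← habsB] at hg10
      exact (abs_dvd _ _).mp hg10
    have hdvd11 : B 0 1 ∣ B 1 1 - B 0 0 := by
      have hg11 : (g : ℤ) ∣ B 1 1 - B 0 0 := by
        rw [hB, conjdiag, hg]; exact gcd_dvd_comb A _ _ _
      rw [← habsB] at hg11
      exact (abs_dvd _ _).mp hg11
    obtain ⟨a₂, ha₂⟩ := hdvd10
    obtain ⟨a₁, ha₁⟩ := hdvd11
    refine ⟨a₁, a₂, X, ?_⟩
    show _ * _ = _ * _
    rw [← hB]
    ext i j
    fin_cases i <;> fin_cases j <;>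
      simp [frobeniusMatrix2, Matrix.mul_apply, Fin.sum_univ_two] <;>
      first
        | linear_combination ha₂
        | linear_combination -ha₂
        | linear_combination ha₁
        | linear_combination -ha₁
        | linear_combination a₂ * ha₁ - a₁ * ha₂
end

section
/- Let C be a k×k integer matrix whose characteristic polynomial is irreducible over ℚ. Then the set Ξ̄(C) of all k×k integer matrices commuting with C is an additive group isomorphic to ℤ^k; equivalently, Ξ̄(C) is a free ℤ-module of rank k. -/
/-- The set `Ξ̄(C)` of all `k×k` integer matrices commuting with `C`,
as a `ℤ`-submodule (in particular an additive subgroup) of the matrices. -/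
def commutantZ (k : ℕ) (C : Matrix (Fin k) (Fin k) ℤ) :
    Submodule ℤ (Matrix (Fin k) (Fin k) ℤ) where
  carrier := {X | X * C = C * X}
  add_mem' := by
    intro a b ha hb
    simp only [Set.mem_setOf_eq] at *
    rw [add_mul, mul_add, ha, hb]
  zero_mem' := by simp
  smul_mem' := by
    intro c x hx
    simp only [Set.mem_setOf_eq] at *
    rw [smul_mul_assoc, mul_smul_comm, hx]


open Polynomial Matrix

/-- annihilator divisibility -/
private lemma ann_dvd {k : ℕ} (A : Matrix (Fin k) (Fin k) ℚ) (hirr : Irreducible A.charpoly)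
    (v : Fin k → ℚ) (hv : v ≠ 0) (q : ℚ[X])
    (hq : ((Polynomial.aeval A) q).mulVec v = 0) : A.charpoly ∣ q := by
  set I : Ideal ℚ[X] :=
    { carrier := {q | ((Polynomial.aeval A) q).mulVec v = 0}
      add_mem' := by
        intro a b ha hb
        simp only [Set.mem_setOf_eq, map_add, Matrix.add_mulVec] at *
        rw [ha, hb, add_zero]
      zero_mem' := by simp
      smul_mem' := by
        intro c x hx
        simp only [Set.mem_setOf_eq, smul_eq_mul, _root_.map_mul] at *
        rw [← Matrix.mulVec_mulVec, hx, Matrix.mulVec_zero] } with hI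
  have hcp : A.charpoly ∈ I := by
    show ((Polynomial.aeval A) A.charpoly).mulVec v = 0
    rw [Matrix.aeval_self_charpoly, Matrix.zero_mulVec]
  have hqI : q ∈ I := hq
  have hne : I ≠ ⊤ := by
    intro h
    have h1 : (1 : ℚ[X]) ∈ I := h ▸ Submodule.mem_top
    have : ((Polynomial.aeval A) (1:ℚ[X])).mulVec v = 0 := h1
    rw [_root_.map_one, Matrix.one_mulVec] at this
    exact hv this
  obtain ⟨g, hg⟩ := (IsPrincipalIdealRing.principal I)
  have hgd : g ∣ A.charpoly := by
    rw [hg, Ideal.submodule_span_eq, Ideal.mem_span_singleton] at hcp; exact hcp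
  have hgu : ¬ IsUnit g := by
    intro hu
    apply hne
    rw [hg, Ideal.submodule_span_eq, Ideal.span_singleton_eq_top.mpr hu]
  obtain ⟨c, hc⟩ := hgd
  rcases hirr.isUnit_or_isUnit hc with h | h
  · exact absurd h hgu
  · have : Associated g A.charpoly := ⟨h.unit, by rw [hc]; simp⟩
    rw [hg, Ideal.submodule_span_eq, Ideal.mem_span_singleton] at hqI
    exact dvd_trans this.symm.dvd hqI

private lemma pow_mulVec_linearIndependent {k : ℕ} (hk : 0 < k) (A : Matrix (Fin k) (Fin k) ℚ)
    (hirr : Irreducible A.charpoly) (v : Fin k → ℚ) (hv : v ≠ 0) :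
    LinearIndependent ℚ (fun i : Fin k => (A ^ (i : ℕ)).mulVec v) := by
  rw [Fintype.linearIndependent_iff]
  intro c hc
  set q : ℚ[X] := ∑ i : Fin k, Polynomial.C (c i) * Polynomial.X ^ (i : ℕ) with hqdef
  have haq : (Polynomial.aeval A) q = ∑ i : Fin k, c i • A ^ (i : ℕ) := by
    rw [hqdef, map_sum]
    congr 1; funext i
    rw [_root_.map_mul, Polynomial.aeval_C, map_pow, Polynomial.aeval_X, Algebra.smul_def]
  let ev : Matrix (Fin k) (Fin k) ℚ →ₗ[ℚ] (Fin k → ℚ) :=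
    { toFun := fun Y => Y.mulVec v
      map_add' := fun Y Z => Matrix.add_mulVec Y Z v
      map_smul' := fun r Y => Matrix.smul_mulVec r Y v }
  have hql : ((Polynomial.aeval A) q).mulVec v = 0 := by
    show ev ((Polynomial.aeval A) q) = 0
    rw [haq, map_sum]
    simpa [ev] using hc
  have hdvd := ann_dvd A hirr v hv q hql
  have hdegp : A.charpoly.degree = (k : ℕ) := by
    have := A.charpoly_natDegree_eq_dim
    rw [Polynomial.degree_eq_natDegree (A.charpoly_monic.ne_zero), this, Fintype.card_fin]
  have hdegq : q.degree < (k : ℕ) := by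
    rw [hqdef]
    apply lt_of_le_of_lt (Polynomial.degree_sum_le _ _)
    apply Finset.sup_lt_iff (WithBot.bot_lt_coe _) |>.mpr
    intro i _
    apply lt_of_le_of_lt (Polynomial.degree_C_mul_X_pow_le _ _)
    exact_mod_cast Nat.cast_lt.mpr i.2
  have hq0 : q = 0 := Polynomial.eq_zero_of_dvd_of_degree_lt hdvd (hdegp ▸ hdegq)
  intro j
  have := congrArg (fun p => Polynomial.coeff p (j : ℕ)) hq0
  simp only [hqdef, Polynomial.finset_sum_coeff, Polynomial.coeff_C_mul,
    Polynomial.coeff_X_pow, Polynomial.coeff_zero] at this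
  rwa [Finset.sum_eq_single j (fun i _ hij => by
      simp [Fin.val_eq_val, (Ne.symm hij : j ≠ i)]) (by simp), if_pos rfl, mul_one] at this

private lemma commute_eq_zero {k : ℕ} (hk : 0 < k) (A : Matrix (Fin k) (Fin k) ℚ)
    (hirr : Irreducible A.charpoly) (v : Fin k → ℚ) (hv : v ≠ 0)
    (X : Matrix (Fin k) (Fin k) ℚ) (hX : X * A = A * X) (h0 : X.mulVec v = 0) :
    X = 0 := by
  have hw := pow_mulVec_linearIndependent hk A hirr v hv
  have : Nonempty (Fin k) := ⟨⟨0, hk⟩⟩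
  have hcard : Fintype.card (Fin k) = Module.finrank ℚ (Fin k → ℚ) := by
    simp [Module.finrank_pi]
  let b := basisOfLinearIndependentOfCardEqFinrank hw hcard
  have hb : ∀ i, b i = (A ^ (i : ℕ)).mulVec v := fun i => by
    simp [b, coe_basisOfLinearIndependentOfCardEqFinrank]
  have hml : X.mulVecLin = 0 := by
    apply b.ext
    intro i
    rw [hb i]
    show X.mulVec ((A ^ (i : ℕ)).mulVec v) = _
    rw [Matrix.mulVec_mulVec, (Commute.pow_right hX i : X * A ^ (i:ℕ) = A ^ (i:ℕ) * X),
      ← Matrix.mulVec_mulVec, h0, Matrix.mulVec_zero]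
    rfl
  ext i j
  have := congrArg (fun f => f (Pi.single j 1) i) hml
  simpa [Matrix.mulVecLin, Matrix.mulVec_single] using this

/-- If the characteristic polynomial of a `k×k` integer matrix `C` is irreducible
over ℚ, then the additive group `Ξ̄(C)` of integer matrices commuting with `C` is a
free ℤ-module of rank `k`, i.e. isomorphic to `ℤ^k`. -/
theorem commutant_isomorphic_to_Zk
    (k : ℕ) (C : Matrix (Fin k) (Fin k) ℤ)
    (hirr : Irreducible (C.charpoly.map (Int.castRingHom ℚ))) :
    Nonempty ((commutantZ k C) ≃ₗ[ℤ] (Fin k → ℤ)) := by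
  -- k is positive
  have hk : 0 < k := by
    rcases Nat.eq_zero_or_pos k with h | h
    · exfalso
      subst h
      apply hirr.not_isUnit
      have : C.charpoly = 1 := by
        rw [Matrix.charpoly, Matrix.det_isEmpty]
      rw [this, Polynomial.map_one]
      exact isUnit_one
    · exact h
  -- the matrix over ℚ
  set A : Matrix (Fin k) (Fin k) ℚ := C.map (Int.castRingHom ℚ) with hA
  have hirrA : Irreducible A.charpoly := by
    rwa [hA, Matrix.charpoly_map]
  -- the vector
  set v : Fin k → ℚ := Pi.single ⟨0, hk⟩ 1 with hv'
  have hv : v ≠ 0 := by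
    intro h
    have := congrFun h ⟨0, hk⟩
    simp [hv'] at this
  -- the embedding ℤ-matrices → ℚ-matrices
  set φ : Matrix (Fin k) (Fin k) ℤ →+* Matrix (Fin k) (Fin k) ℚ :=
    (Int.castRingHom ℚ).mapMatrix with hφ
  set ζ : Matrix (Fin k) (Fin k) ℤ →ₗ[ℤ] Matrix (Fin k) (Fin k) ℚ :=
    φ.toAddMonoidHom.toIntLinearMap with hζ
  have hζinj : Function.Injective ζ := by
    intro X Y h
    have h' : X.map (fun a : ℤ => (a : ℚ)) = Y.map (fun a : ℤ => (a : ℚ)) := h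
    exact Matrix.map_injective Int.cast_injective h'
  have hζC : ζ C = A := rfl
  -- evaluation map
  set ev : Matrix (Fin k) (Fin k) ℚ →ₗ[ℚ] (Fin k → ℚ) :=
    { toFun := fun Y => Y.mulVec v
      map_add' := fun Y Z => Matrix.add_mulVec Y Z v
      map_smul' := fun r Y => Matrix.smul_mulVec r Y v } with hev
  -- linear independence of powers of A over ℚ
  have hApow : LinearIndependent ℚ (fun i : Fin k => A ^ (i : ℕ)) := by
    have hw := pow_mulVec_linearIndependent hk A hirrA v hv
    exact LinearIndependent.of_comp ev hw
  -- S := commutant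
  set S := commutantZ k C with hS
  -- lower bound : k ≤ finrank ℤ S
  have hCpow : ∀ i : ℕ, C ^ i ∈ S := fun i => ((Commute.refl C).pow_left i).eq
  set g : Fin k → S := fun i => ⟨C ^ (i : ℕ), hCpow i⟩ with hg
  have hgind : LinearIndependent ℤ g := by
    apply LinearIndependent.of_comp (ζ ∘ₗ S.subtype)
    have : (⇑(ζ ∘ₗ S.subtype) ∘ g) = fun i : Fin k => A ^ (i : ℕ) := by
      funext i
      show ζ (C ^ (i : ℕ)) = A ^ (i : ℕ)
      show φ (C ^ (i : ℕ)) = A ^ (i : ℕ)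
      rw [map_pow]
      rfl
    rw [this]
    exact (LinearIndependent.iff_fractionRing ℤ ℚ).mpr hApow
  have hlow : k ≤ Module.finrank ℤ S := by
    simpa using hgind.fintype_card_le_finrank
  -- upper bound
  set ι := Module.Free.ChooseBasisIndex ℤ S with hι
  set b : Module.Basis ι ℤ S := Module.Free.chooseBasis ℤ S with hb
  set m : ι → Matrix (Fin k) (Fin k) ℚ := fun i => ζ ((b i) : Matrix (Fin k) (Fin k) ℤ) with hm
  have hmZ : LinearIndependent ℤ m :=
    b.linearIndependent.map' (ζ ∘ₗ S.subtype)
      (LinearMap.ker_eq_bot.mpr (hζinj.comp Subtype.val_injective))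
  have hmQ : LinearIndependent ℚ m := (LinearIndependent.iff_fractionRing ℤ ℚ).mp hmZ
  -- m i commutes with A
  have hmc : ∀ i, m i * A = A * m i := by
    intro i
    have hbc : ((b i) : Matrix (Fin k) (Fin k) ℤ) * C = C * ((b i) : Matrix (Fin k) (Fin k) ℤ) :=
      (b i).2
    show φ _ * φ C = φ C * φ _
    rw [← _root_.map_mul, ← _root_.map_mul, hbc]
  -- the ℚ-commutant
  set Qc : Submodule ℚ (Matrix (Fin k) (Fin k) ℚ) :=
    { carrier := {X | X * A = A * X}
      add_mem' := by
        intro x y hx hy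
        simp only [Set.mem_setOf_eq] at *
        rw [add_mul, mul_add, hx, hy]
      zero_mem' := by simp
      smul_mem' := by
        intro c x hx
        simp only [Set.mem_setOf_eq] at *
        rw [smul_mul_assoc, mul_smul_comm, hx] } with hQc
  have hspan : Submodule.span ℚ (Set.range m) ≤ Qc := by
    rw [Submodule.span_le]
    rintro - ⟨i, rfl⟩
    exact hmc i
  have hdisj : Disjoint (Submodule.span ℚ (Set.range m)) (LinearMap.ker ev) := by
    rw [Submodule.disjoint_def]
    intro x hx1 hx2
    exact commute_eq_zero hk A hirrA v hv x (hspan hx1) (LinearMap.mem_ker.mp hx2)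
  have hevm : LinearIndependent ℚ (⇑ev ∘ m) := hmQ.map hdisj
  have hhigh : Module.finrank ℤ S ≤ k := by
    have h1 : Fintype.card ι ≤ Module.finrank ℚ (Fin k → ℚ) := hevm.fintype_card_le_finrank
    rwa [Module.finrank_pi, Fintype.card_fin, ← Module.finrank_eq_card_chooseBasisIndex] at h1
  have hfr : Module.finrank ℤ S = k := le_antisymm hhigh hlow
  have hcard : Fintype.card ι = k := by
    rw [← Module.finrank_eq_card_chooseBasisIndex, hfr]
  exact ⟨(b.reindex (Fintype.equivFinOfCardEq hcard)).equivFun⟩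
end

section
/- The 3×3 integer matrix A with rows (1,2,0), (0,1,2), (−7,0,29) has determinant 1 and characteristic polynomial irreducible over ℚ, but A is not of Frobenius type: there do not exist integers a₁, a₂, a₃ and X ∈ SL(3,ℤ) such that X A X⁻¹ commutes with the Frobenius matrix M_{a₁,a₂,a₃}. -/
open Matrix Polynomial

/-- The Frobenius matrix `M_{a₁,a₂,a₃}` with rows `(0,1,0)`, `(0,0,1)`, `(a₃,a₂,a₁)`. -/
def frobeniusMatrix3 (a₁ a₂ a₃ : ℤ) : Matrix (Fin 3) (Fin 3) ℤ :=
  !![0, 1, 0; 0, 0, 1; a₃, a₂, a₁]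

/-- A 3×3 integer matrix `A` is of Frobenius type if there exist integers `a₁, a₂, a₃`
and `X ∈ SL(3,ℤ)` such that `X A X⁻¹` commutes with `M_{a₁,a₂,a₃}`. -/
def IsFrobeniusType3 (A : Matrix (Fin 3) (Fin 3) ℤ) : Prop :=
  ∃ (a₁ a₂ a₃ : ℤ) (X : Matrix.SpecialLinearGroup (Fin 3) ℤ),
    Commute ((X : Matrix (Fin 3) (Fin 3) ℤ) * A * ((X⁻¹ : Matrix.SpecialLinearGroup (Fin 3) ℤ) : Matrix (Fin 3) (Fin 3) ℤ))
      (frobeniusMatrix3 a₁ a₂ a₃)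

namespace NonFrobeniusAux

/-- The example matrix. -/
abbrev Amat : Matrix (Fin 3) (Fin 3) ℤ := !![1, 2, 0; 0, 1, 2; -7, 0, 29]
/-- `N = A - 1`. -/
abbrev Nmat : Matrix (Fin 3) (Fin 3) ℤ := !![0, 2, 0; 0, 0, 2; -7, 0, 28]
/-- `D = (A - 1)^2 / 2`. -/
abbrev Dmat : Matrix (Fin 3) (Fin 3) ℤ := !![0, 0, 2; -7, 0, 28; -98, -7, 392]

/-- Any integer matrix commuting with `A` is an integral combination of `1, N, D`. -/
theorem commutant (Y : Matrix (Fin 3) (Fin 3) ℤ) (h : Y * Amat = Amat * Y) :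
    ∃ y₀ y₁ y₂ : ℤ, Y = y₀ • (1 : Matrix (Fin 3) (Fin 3) ℤ) + y₁ • Nmat + y₂ • Dmat := by
  have e := fun i j => congrFun (congrFun h i) j
  simp only [Matrix.mul_apply, Fin.sum_univ_three] at e
  have e00 := e 0 0; have e01 := e 0 1; have e02 := e 0 2
  have e10 := e 1 0; have e11 := e 1 1; have e12 := e 1 2
  have e20 := e 2 0; have e21 := e 2 1; have e22 := e 2 2
  norm_num [Matrix.cons_val_two, Matrix.vecHead, Matrix.vecTail] at e00 e01 e02 e10 e11 e12 e20 e21 e22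
  obtain ⟨y₁, hy₁⟩ : (2 : ℤ) ∣ Y 0 1 := by omega
  obtain ⟨y₂, hy₂⟩ : (2 : ℤ) ∣ Y 0 2 := by omega
  refine ⟨Y 0 0, y₁, y₂, ?_⟩
  rw [Matrix.eta_fin_three Y, Matrix.one_fin_three]
  ext i j
  fin_cases i <;> fin_cases j <;> norm_num [Matrix.cons_val_two, Matrix.vecHead, Matrix.vecTail] <;> omega

theorem charAmat : Amat.charpoly = X^3 - C 31 * X^2 + C 59 * X - C 1 := by
  unfold Matrix.charpoly
  rw [Matrix.det_fin_three]
  simp [charmatrix_apply, Matrix.one_apply]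
  ring

theorem irredQ : Irreducible (Amat.charpoly.map (Int.castRingHom ℚ)) := by
  rw [charAmat]
  have hq : (X^3 - C 31 * X^2 + C 59 * X - C 1 : ℤ[X]).map (Int.castRingHom ℚ)
      = (X^3 - 31 * X^2 + 59 * X - 1 : ℚ[X]) := by
    simp [Polynomial.map_sub, Polynomial.map_add, Polynomial.map_pow, Polynomial.map_mul]
  rw [hq]
  have hdeg : (X^3 - 31 * X^2 + 59 * X - 1 : ℚ[X]).natDegree = 3 := by
    compute_degree!
  rw [Polynomial.irreducible_iff_roots_eq_zero_of_degree_le_three (by omega) (by omega)]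
  rw [Multiset.eq_zero_iff_forall_notMem]
  intro r hr
  have hne : (X^3 - 31 * X^2 + 59 * X - 1 : ℚ[X]) ≠ 0 := by
    intro h0; rw [h0] at hdeg; simp at hdeg
  rw [Polynomial.mem_roots hne] at hr
  have hroot : r^3 - 31*r^2 + 59*r - 1 = 0 := by
    simpa [Polynomial.IsRoot] using hr
  have haev : Polynomial.aeval r (X^3 - C 31 * X^2 + C 59 * X - C 1 : ℤ[X]) = 0 := by
    simp only [map_sub, map_add, _root_.map_mul, map_pow, Polynomial.aeval_X, Polynomial.aeval_C]
    simp only [algebraMap_int_eq, map_ofNat, eq_intCast]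
    push_cast
    linear_combination hroot
  have hdegZ : (X^3 - C 31 * X^2 + C 59 * X - C 1 : ℤ[X]).natDegree = 3 := by
    compute_degree!
  have hmonic : (X^3 - C 31 * X^2 + C 59 * X - C 1 : ℤ[X]).Monic := by
    rw [Polynomial.Monic, Polynomial.leadingCoeff, hdegZ]
    compute_degree!
  obtain ⟨r', hre, hdvd⟩ := exists_integer_of_is_root_of_monic hmonic haev
  have hc0 : (X^3 - C 31 * X^2 + C 59 * X - C 1 : ℤ[X]).coeff 0 = -1 := by
    simp [Polynomial.coeff_sub, Polynomial.coeff_add, Polynomial.coeff_X_pow]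
  rw [hc0] at hdvd
  have hu : r' = 1 ∨ r' = -1 := Int.isUnit_iff.mp (isUnit_of_dvd_one (dvd_neg.mp hdvd))
  have hre' : r = (r' : ℚ) := by rw [hre]; simp
  rcases hu with h | h <;> rw [h] at hre' <;> rw [hre'] at hroot <;> norm_num at hroot

theorem notFrob : ¬ IsFrobeniusType3 Amat := by
  rintro ⟨a₁, a₂, a₃, X, hc⟩
  set M : Matrix (Fin 3) (Fin 3) ℤ := frobeniusMatrix3 a₁ a₂ a₃ with hM
  set Xm : Matrix (Fin 3) (Fin 3) ℤ := (X : Matrix (Fin 3) (Fin 3) ℤ) with hXm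
  set Xi : Matrix (Fin 3) (Fin 3) ℤ :=
    ((X⁻¹ : Matrix.SpecialLinearGroup (Fin 3) ℤ) : Matrix (Fin 3) (Fin 3) ℤ) with hXi
  have h1 : Xm * Xi = 1 := by
    rw [hXm, hXi, ← Matrix.SpecialLinearGroup.coe_mul, mul_inv_cancel,
      Matrix.SpecialLinearGroup.coe_one]
  have h2 : Xi * Xm = 1 := by
    rw [hXm, hXi, ← Matrix.SpecialLinearGroup.coe_mul, inv_mul_cancel,
      Matrix.SpecialLinearGroup.coe_one]
  have c1 : ∀ Z : Matrix (Fin 3) (Fin 3) ℤ, Xm * (Xi * Z) = Z := by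
    intro Z; rw [← Matrix.mul_assoc, h1, Matrix.one_mul]
  have c2 : ∀ Z : Matrix (Fin 3) (Fin 3) ℤ, Xi * (Xm * Z) = Z := by
    intro Z; rw [← Matrix.mul_assoc, h2, Matrix.one_mul]
  have hc' : (Xm * Amat * Xi) * M = M * (Xm * Amat * Xi) := hc
  set Y : Matrix (Fin 3) (Fin 3) ℤ := Xi * M * Xm with hY
  have hYA : Y * Amat = Amat * Y := by
    have e2 := congrArg (fun Z => Xi * (Z * Xm)) hc'
    simp only [Matrix.mul_assoc] at e2 ⊢
    simp only [c1, c2, h1, h2, Matrix.mul_one, Matrix.one_mul] at e2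
    rw [hY]
    simp only [Matrix.mul_assoc]
    exact e2.symm
  have hMXm : Xm * Y = M * Xm := by
    rw [hY]
    simp only [Matrix.mul_assoc, c1, c2]
  have hr1 : ∀ j, Xm 1 j = (Xm * Y) 0 j := by
    intro j; rw [hMXm, hM]
    simp [frobeniusMatrix3, Matrix.mul_apply, Fin.sum_univ_three]
  have hr2 : ∀ j, Xm 2 j = (Xm * Y) 1 j := by
    intro j; rw [hMXm, hM]
    simp [frobeniusMatrix3, Matrix.mul_apply, Fin.sum_univ_three]
  obtain ⟨y₀, y₁, y₂, hYd⟩ := commutant Y hYA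
  have hYmat : Y = !![y₀, 2*y₁, 2*y₂; -7*y₂, y₀, 2*y₁+28*y₂;
      -7*y₁-98*y₂, -7*y₂, y₀+28*y₁+392*y₂] := by
    rw [hYd, Matrix.one_fin_three]
    ext i j
    fin_cases i <;> fin_cases j <;> norm_num <;> ring
  have hdet : Xm.det = 1 := X.property
  -- unfold the rows of Xm
  have mul0 : ∀ j, (Xm * Y) 0 j = Xm 0 0 * Y 0 j + Xm 0 1 * Y 1 j + Xm 0 2 * Y 2 j := by
    intro j; rw [Matrix.mul_apply, Fin.sum_univ_three]
  have mul1 : ∀ j, (Xm * Y) 1 j = Xm 1 0 * Y 0 j + Xm 1 1 * Y 1 j + Xm 1 2 * Y 2 j := by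
    intro j; rw [Matrix.mul_apply, Fin.sum_univ_three]
  set w0 := Xm 0 0 with hw0
  set w1 := Xm 0 1 with hw1
  set w2 := Xm 0 2 with hw2
  have hY00 : Y 0 0 = y₀ := by rw [hYmat]; norm_num
  have hY01 : Y 0 1 = 2*y₁ := by rw [hYmat]; norm_num
  have hY02 : Y 0 2 = 2*y₂ := by rw [hYmat]; norm_num [Matrix.cons_val_two, Matrix.vecHead, Matrix.vecTail]
  have hY10 : Y 1 0 = -7*y₂ := by rw [hYmat]; norm_num
  have hY11 : Y 1 1 = y₀ := by rw [hYmat]; norm_num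
  have hY12 : Y 1 2 = 2*y₁+28*y₂ := by rw [hYmat]; norm_num [Matrix.cons_val_two, Matrix.vecHead, Matrix.vecTail]
  have hY20 : Y 2 0 = -7*y₁-98*y₂ := by rw [hYmat]; norm_num [Matrix.cons_val_two, Matrix.vecHead, Matrix.vecTail]
  have hY21 : Y 2 1 = -7*y₂ := by rw [hYmat]; norm_num [Matrix.cons_val_two, Matrix.vecHead, Matrix.vecTail]
  have hY22 : Y 2 2 = y₀+28*y₁+392*y₂ := by rw [hYmat]; norm_num [Matrix.cons_val_two, Matrix.vecHead, Matrix.vecTail]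
  have h10 : Xm 1 0 = w0 * y₀ + w1 * (-7*y₂) + w2 * (-7*y₁-98*y₂) := by
    rw [hr1 0, mul0 0, hY00, hY10, hY20]
  have h11 : Xm 1 1 = w0 * (2*y₁) + w1 * y₀ + w2 * (-7*y₂) := by
    rw [hr1 1, mul0 1, hY01, hY11, hY21]
  have h12 : Xm 1 2 = w0 * (2*y₂) + w1 * (2*y₁+28*y₂) + w2 * (y₀+28*y₁+392*y₂) := by
    rw [hr1 2, mul0 2, hY02, hY12, hY22]
  have h20 : Xm 2 0 = Xm 1 0 * y₀ + Xm 1 1 * (-7*y₂) + Xm 1 2 * (-7*y₁-98*y₂) := by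
    rw [hr2 0, mul1 0, hY00, hY10, hY20]
  have h21 : Xm 2 1 = Xm 1 0 * (2*y₁) + Xm 1 1 * y₀ + Xm 1 2 * (-7*y₂) := by
    rw [hr2 1, mul1 1, hY01, hY11, hY21]
  have h22 : Xm 2 2 = Xm 1 0 * (2*y₂) + Xm 1 1 * (2*y₁+28*y₂) + Xm 1 2 * (y₀+28*y₁+392*y₂) := by
    rw [hr2 2, mul1 2, hY02, hY12, hY22]
  rw [Matrix.det_fin_three] at hdet
  rw [h20, h21, h22, h10, h11, h12] at hdet
  rw [← hw0, ← hw1, ← hw2] at hdet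
  have hFQ : (2*y₁^3 + 56*y₁^2*y₂ + 392*y₁*y₂^2 + 7*y₂^3) *
      (4*w0^3 + 56*w0^2*w1 + 784*w0^2*w2 + 42*w0*w1*w2 + 392*w0*w2^2
        - 14*w1^3 - 196*w1^2*w2 + 49*w2^3) = 1 := by
    linear_combination hdet
  have hunit := Int.eq_one_or_neg_one_of_mul_eq_one' hFQ
  have h7 : ∀ a b : ZMod 7, ¬(2*a^3 + 56*a^2*b + 392*a*b^2 + 7*b^3 = 1 ∨
      2*a^3 + 56*a^2*b + 392*a*b^2 + 7*b^3 = -1) := by decide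
  apply h7 (y₁ : ZMod 7) (y₂ : ZMod 7)
  rcases hunit with ⟨hF, _⟩ | ⟨hF, _⟩
  · left
    have := congrArg (fun z : ℤ => (z : ZMod 7)) hF
    push_cast at this
    convert this using 2
  · right
    have := congrArg (fun z : ℤ => (z : ZMod 7)) hF
    push_cast at this
    convert this using 2

end NonFrobeniusAux

/-- The matrix with rows `(1,2,0)`, `(0,1,2)`, `(−7,0,29)` has determinant one and
irreducible characteristic polynomial over ℚ, but is not of Frobenius type. -/
theorem example_non_frobenius_matrix :
    (!![1, 2, 0; 0, 1, 2; -7, 0, 29] : Matrix (Fin 3) (Fin 3) ℤ).det = 1 ∧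
    Irreducible ((!![1, 2, 0; 0, 1, 2; -7, 0, 29] : Matrix (Fin 3) (Fin 3) ℤ).charpoly.map
      (Int.castRingHom ℚ)) ∧
    ¬ IsFrobeniusType3 (!![1, 2, 0; 0, 1, 2; -7, 0, 29] : Matrix (Fin 3) (Fin 3) ℤ) := by
  refine ⟨?_, NonFrobeniusAux.irredQ, NonFrobeniusAux.notFrob⟩
  rw [Matrix.det_fin_three]
  norm_num [Matrix.cons_val_two, Matrix.vecHead, Matrix.vecTail]
end

section
/- For the matrix A with rows (1,2,0), (0,1,2), (−7,0,29), the matrix B = (A² − 30A + 29E)/2 has integer entries, and {E, A, B} is a ℤ-basis of the additive group Ξ̄(A) of all 3×3 integer matrices commuting with A. -/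
set_option maxHeartbeats 1000000

/-- For `A = !![1,2,0; 0,1,2; -7,0,29]`, there is an integer matrix `B` equal to
`(A² − 30A + 29E)/2` (i.e. `2B = A² − 30A + 29E`), and `{E, A, B}` is a ℤ-basis of the
additive group `Ξ̄(A)` of all 3×3 integer matrices commuting with `A`. -/
theorem basis_of_commutant_of_example_matrix :
    ∃ B : Matrix (Fin 3) (Fin 3) ℤ,
      (2 : ℤ) • B
        = (!![1, 2, 0; 0, 1, 2; -7, 0, 29] : Matrix (Fin 3) (Fin 3) ℤ) ^ 2
          - (30 : ℤ) • (!![1, 2, 0; 0, 1, 2; -7, 0, 29] : Matrix (Fin 3) (Fin 3) ℤ)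
          + (29 : ℤ) • (1 : Matrix (Fin 3) (Fin 3) ℤ) ∧
      B * !![1, 2, 0; 0, 1, 2; -7, 0, 29] = !![1, 2, 0; 0, 1, 2; -7, 0, 29] * B ∧
      ∀ D : Matrix (Fin 3) (Fin 3) ℤ,
        D * !![1, 2, 0; 0, 1, 2; -7, 0, 29] = !![1, 2, 0; 0, 1, 2; -7, 0, 29] * D →
        ∃! c : ℤ × ℤ × ℤ,
          D = c.1 • (1 : Matrix (Fin 3) (Fin 3) ℤ)
            + c.2.1 • (!![1, 2, 0; 0, 1, 2; -7, 0, 29] : Matrix (Fin 3) (Fin 3) ℤ)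
            + c.2.2 • B := by
  refine ⟨!![0, -28, 2; -7, 0, 0; 0, -7, 0], ?_, ?_, ?_⟩
  · simp only [Matrix.one_fin_three]
    ext i j
    fin_cases i <;> fin_cases j <;>
      simp [pow_two, Matrix.mul_apply, Fin.sum_univ_three, Matrix.smul_apply,
        Matrix.sub_apply, Matrix.add_apply, Matrix.vecHead,
        Matrix.vecTail] <;> norm_num
  · ext i j
    fin_cases i <;> fin_cases j <;>
      simp [Matrix.mul_apply, Fin.sum_univ_three, Matrix.vecHead, Matrix.vecTail] <;>
      norm_num
  · intro D hD
    have h : ∀ i j, (D * !![(1:ℤ), 2, 0; 0, 1, 2; -7, 0, 29]) i j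
        = (!![(1:ℤ), 2, 0; 0, 1, 2; -7, 0, 29] * D) i j :=
      fun i j => congrFun (congrFun hD i) j
    have h00 := h 0 0; have h01 := h 0 1; have h02 := h 0 2
    have h10 := h 1 0; have h11 := h 1 1; have h12 := h 1 2
    have h20 := h 2 0; have h21 := h 2 1; have h22 := h 2 2
    simp [Matrix.mul_apply, Fin.sum_univ_three] at h00 h01 h02 h10 h11 h12 h20 h21 h22
    have hb : (2 : ℤ) ∣ D 1 2 := by omega
    have ht : (7 : ℤ) ∣ D 2 1 := by omega
    obtain ⟨b, hb⟩ := hb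
    obtain ⟨t, ht⟩ := ht
    refine ⟨(D 2 2 - 29 * b, b, -t), ?_, ?_⟩
    · simp only [Matrix.one_fin_three]
      ext i j
      fin_cases i <;> fin_cases j <;>
        simp [Matrix.add_apply, Matrix.smul_apply, smul_eq_mul,
          Matrix.vecHead, Matrix.vecTail] <;> omega
    · rintro ⟨a', b', c'⟩ hy
      rw [Matrix.one_fin_three] at hy
      have g : ∀ i j, D i j = (a' • (!![(1:ℤ), 0, 0; 0, 1, 0; 0, 0, 1])
          + b' • (!![(1:ℤ), 2, 0; 0, 1, 2; -7, 0, 29])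
          + c' • (!![(0:ℤ), -28, 2; -7, 0, 0; 0, -7, 0])) i j :=
        fun i j => congrFun (congrFun hy i) j
      have g12 := g 1 2; have g21 := g 2 1; have g22 := g 2 2
      simp [Matrix.add_apply, Matrix.smul_apply, smul_eq_mul,
        Matrix.vecHead, Matrix.vecTail] at g12 g21 g22
      simp only [Prod.mk.injEq]
      refine ⟨by omega, by omega, by omega⟩
end

section
/- There is no 3×3 integer matrix with characteristic polynomial irreducible over ℚ whose norm (the sum of the absolute values of all nine entries) is less than or equal to three. -/
set_option synthInstance.maxSize 2000
set_option synthInstance.maxHeartbeats 2000000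
set_option maxHeartbeats 4000000

open Finset in
private lemma key3 : ∀ a ∈ Icc (-3:ℤ) 3, ∀ b ∈ Icc (-3:ℤ) 3, |a|+|b| ≤ 3 →
    ∀ c ∈ Icc (-3:ℤ) 3, |a|+|b|+|c| ≤ 3 →
    ∀ d ∈ Icc (-3:ℤ) 3, |a|+|b|+|c|+|d| ≤ 3 →
    ∀ e ∈ Icc (-3:ℤ) 3, |a|+|b|+|c|+|d|+|e| ≤ 3 →
    ∀ f ∈ Icc (-3:ℤ) 3, |a|+|b|+|c|+|d|+|e|+|f| ≤ 3 →
    ∀ g ∈ Icc (-3:ℤ) 3, |a|+|b|+|c|+|d|+|e|+|f|+|g| ≤ 3 →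
    ∀ h ∈ Icc (-3:ℤ) 3, |a|+|b|+|c|+|d|+|e|+|f|+|g|+|h| ≤ 3 →
    ∀ i ∈ Icc (-3:ℤ) 3, |a|+|b|+|c|+|d|+|e|+|f|+|g|+|h|+|i| ≤ 3 →
    ((0-a)*(0-e)*(0-i) - (0-a)*(0-f)*(0-h) - (0-b)*(0-d)*(0-i) + (0-b)*(0-f)*(0-g)
      + (0-c)*(0-d)*(0-h) - (0-c)*(0-e)*(0-g)) *
    (((1-a)*(1-e)*(1-i) - (1-a)*(0-f)*(0-h) - (0-b)*(0-d)*(1-i) + (0-b)*(0-f)*(0-g)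
      + (0-c)*(0-d)*(0-h) - (0-c)*(1-e)*(0-g)) *
    ((-1-a)*(-1-e)*(-1-i) - (-1-a)*(0-f)*(0-h) - (0-b)*(0-d)*(-1-i) + (0-b)*(0-f)*(0-g)
      + (0-c)*(0-d)*(0-h) - (0-c)*(-1-e)*(0-g))) = 0 := by decide

private lemma charpoly_eval3 (M : Matrix (Fin 3) (Fin 3) ℤ) (r : ℤ) :
    M.charpoly.eval r =
      (r - M 0 0) * (r - M 1 1) * (r - M 2 2) - (r - M 0 0) * (0 - M 1 2) * (0 - M 2 1)
      - (0 - M 0 1) * (0 - M 1 0) * (r - M 2 2) + (0 - M 0 1) * (0 - M 1 2) * (0 - M 2 0)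
      + (0 - M 0 2) * (0 - M 1 0) * (0 - M 2 1) - (0 - M 0 2) * (r - M 1 1) * (0 - M 2 0) := by
  have h : M.charpoly.eval r = ((Matrix.scalar (Fin 3) r) - M).det := by
    rw [Matrix.charpoly, eval_det, Matrix.matPolyEquiv_charmatrix]
    simp
  rw [h, Matrix.det_fin_three]
  simp [Matrix.scalar_apply, Matrix.sub_apply, ← Matrix.diagonal_intCast, Matrix.diagonal_apply]

/-- The norm of an integer matrix: the sum of the absolute values of all its entries. -/
def matNorm3 (A : Matrix (Fin 3) (Fin 3) ℤ) : ℤ := ∑ i, ∑ j, |A i j|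

/-- There is no 3×3 integer matrix with characteristic polynomial irreducible over ℚ
whose norm is at most three. -/
theorem no_irreducible_matrix_of_norm_le_three
    (A : Matrix (Fin 3) (Fin 3) ℤ) (hnorm : matNorm3 A ≤ 3) :
    ¬ Irreducible (A.charpoly.map (Int.castRingHom ℚ)) := by
  intro hirr
  have hn : |A 0 0| + |A 0 1| + |A 0 2| + |A 1 0| + |A 1 1| + |A 1 2|
      + |A 2 0| + |A 2 1| + |A 2 2| ≤ 3 := by
    have := hnorm
    simp only [matNorm3, Fin.sum_univ_three] at this
    linarith
  have z00 := abs_nonneg (A 0 0); have z01 := abs_nonneg (A 0 1)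
  have z02 := abs_nonneg (A 0 2); have z10 := abs_nonneg (A 1 0)
  have z11 := abs_nonneg (A 1 1); have z12 := abs_nonneg (A 1 2)
  have z20 := abs_nonneg (A 2 0); have z21 := abs_nonneg (A 2 1)
  have z22 := abs_nonneg (A 2 2)
  have m00 : A 0 0 ∈ Finset.Icc (-3:ℤ) 3 := Finset.mem_Icc.2 (abs_le.1 (by linarith))
  have m01 : A 0 1 ∈ Finset.Icc (-3:ℤ) 3 := Finset.mem_Icc.2 (abs_le.1 (by linarith))
  have m02 : A 0 2 ∈ Finset.Icc (-3:ℤ) 3 := Finset.mem_Icc.2 (abs_le.1 (by linarith))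
  have m10 : A 1 0 ∈ Finset.Icc (-3:ℤ) 3 := Finset.mem_Icc.2 (abs_le.1 (by linarith))
  have m11 : A 1 1 ∈ Finset.Icc (-3:ℤ) 3 := Finset.mem_Icc.2 (abs_le.1 (by linarith))
  have m12 : A 1 2 ∈ Finset.Icc (-3:ℤ) 3 := Finset.mem_Icc.2 (abs_le.1 (by linarith))
  have m20 : A 2 0 ∈ Finset.Icc (-3:ℤ) 3 := Finset.mem_Icc.2 (abs_le.1 (by linarith))
  have m21 : A 2 1 ∈ Finset.Icc (-3:ℤ) 3 := Finset.mem_Icc.2 (abs_le.1 (by linarith))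
  have m22 : A 2 2 ∈ Finset.Icc (-3:ℤ) 3 := Finset.mem_Icc.2 (abs_le.1 (by linarith))
  have hkey := key3 (A 0 0) m00 (A 0 1) m01 (by linarith) (A 0 2) m02 (by linarith)
    (A 1 0) m10 (by linarith) (A 1 1) m11 (by linarith) (A 1 2) m12 (by linarith)
    (A 2 0) m20 (by linarith) (A 2 1) m21 (by linarith) (A 2 2) m22 (by linarith)
  have hroot : ∃ r : ℤ, A.charpoly.eval r = 0 := by
    rcases mul_eq_zero.1 hkey with h | h
    · exact ⟨0, by rw [charpoly_eval3]; linear_combination h⟩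
    · rcases mul_eq_zero.1 h with h' | h'
      · exact ⟨1, by rw [charpoly_eval3]; linear_combination h'⟩
      · exact ⟨-1, by rw [charpoly_eval3]; linear_combination h'⟩
  obtain ⟨r, hr⟩ := hroot
  have hq : (A.charpoly.map (Int.castRingHom ℚ)).IsRoot (r : ℚ) := by
    rw [Polynomial.IsRoot, Polynomial.eval_intCast_map]
    simp [Int.cast_id, hr]
  have hdeg1 := Polynomial.degree_eq_one_of_irreducible_of_root hirr hq
  have hdeg3 : (A.charpoly.map (Int.castRingHom ℚ)).natDegree = 3 := by
    rw [(A.charpoly_monic).natDegree_map, Matrix.charpoly_natDegree_eq_dim]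
    simp
  rw [Polynomial.degree_eq_natDegree hirr.ne_zero, hdeg3] at hdeg1
  exact absurd hdeg1 (by norm_num)
end

section
/- The number of 3×3 integer matrices with characteristic polynomial irreducible over ℚ and norm (sum of absolute values of all nine entries) equal to four is exactly 240. -/
def det3 (A : Matrix (Fin 3) (Fin 3) ℤ) : ℤ :=
  A 0 0 * A 1 1 * A 2 2 - A 0 0 * A 1 2 * A 2 1 - A 0 1 * A 1 0 * A 2 2 +
    A 0 1 * A 1 2 * A 2 0 + A 0 2 * A 1 0 * A 2 1 - A 0 2 * A 1 1 * A 2 0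

lemma det3_eq (A : Matrix (Fin 3) (Fin 3) ℤ) : det3 A = A.det := (Matrix.det_fin_three A).symm

lemma charpoly_eval (A : Matrix (Fin 3) (Fin 3) ℤ) (r : ℤ) :
    A.charpoly.eval r = (Matrix.scalar (Fin 3) r - A).det := by
  rw [Matrix.charpoly, eval_det, Matrix.matPolyEquiv_charmatrix]
  simp

/-- For a monic cubic integer polynomial, irreducibility over ℚ is equivalent to
having no integer root. -/
lemma irred_iff_no_int_root (p : Polynomial ℤ) (hm : p.Monic) (hd : p.natDegree = 3) :
    Irreducible (p.map (Int.castRingHom ℚ)) ↔ ∀ z : ℤ, p.eval z ≠ 0 := by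
  have hmq : (p.map (Int.castRingHom ℚ)).Monic := hm.map _
  have hdq : (p.map (Int.castRingHom ℚ)).natDegree = 3 := by
    rw [hm.natDegree_map]; exact hd
  rw [hmq.irreducible_iff_roots_eq_zero_of_degree_le_three (by omega) (by omega)]
  rw [Multiset.eq_zero_iff_forall_notMem]
  constructor
  · intro h z hz
    refine h (z : ℚ) ?_
    rw [Polynomial.mem_roots hmq.ne_zero, Polynomial.IsRoot.def]
    have h2 := Polynomial.eval_intCast_map (Int.castRingHom ℚ) p z
    simp only [Int.cast_id] at h2
    rw [h2, hz]
    simp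
  · intro h x hx
    rw [Polynomial.mem_roots hmq.ne_zero, Polynomial.IsRoot.def] at hx
    have hint : IsIntegral ℤ x := by
      refine ⟨p, hm, ?_⟩
      rw [← Polynomial.eval_map, algebraMap_int_eq, hx]
    obtain ⟨z, hz⟩ := IsIntegrallyClosed.isIntegral_iff.mp hint
    refine h z ?_
    have hzx : (z : ℚ) = x := by rw [← hz]; simp
    have h2 := Polynomial.eval_intCast_map (Int.castRingHom ℚ) p z
    simp only [Int.cast_id] at h2
    rw [hzx, hx] at h2
    rw [eq_intCast] at h2
    exact_mod_cast h2.symm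

/-- Any integer root of `p` lies within `|p.eval 0|` of zero. -/
lemma no_root_iff_no_root_small (p : Polynomial ℤ) :
    (∀ z : ℤ, z.natAbs ≤ (p.eval 0).natAbs → p.eval z ≠ 0) ↔ ∀ z : ℤ, p.eval z ≠ 0 := by
  constructor
  · intro h z hz
    by_cases h0 : p.eval 0 = 0
    · exact h 0 (by simp) h0
    · have hdvd : z ∣ p.eval 0 := by
        have := Polynomial.sub_dvd_eval_sub z 0 p
        simpa [hz] using (dvd_neg.mpr this)
      have hle : |z| ≤ |p.eval 0| :=
        Int.le_of_dvd (abs_pos.mpr h0) ((abs_dvd _ _).mpr ((dvd_abs _ _).mpr hdvd))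
      refine h z ?_ hz
      rw [Int.abs_eq_natAbs, Int.abs_eq_natAbs] at hle
      omega
  · intro h z _
    exact h z

def Q (A : Matrix (Fin 3) (Fin 3) ℤ) : Prop :=
  matNorm3 A = 4 ∧
    ∀ z : ℤ, z.natAbs ≤ (det3 (Matrix.scalar (Fin 3) 0 - A)).natAbs →
      det3 (Matrix.scalar (Fin 3) z - A) ≠ 0

lemma Q_iff (A : Matrix (Fin 3) (Fin 3) ℤ) :
    Q A ↔ Irreducible (A.charpoly.map (Int.castRingHom ℚ)) ∧ matNorm3 A = 4 := by
  have hmon := A.charpoly_monic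
  have hdeg : A.charpoly.natDegree = 3 := by simp [A.charpoly_natDegree_eq_dim]
  have he : ∀ r : ℤ, det3 (Matrix.scalar (Fin 3) r - A) = A.charpoly.eval r := by
    intro r; rw [det3_eq, charpoly_eval]
  unfold Q
  simp only [he]
  rw [and_comm, irred_iff_no_int_root A.charpoly hmon hdeg,
    ← no_root_iff_no_root_small]

-- Enumeration of integers with |x| ≤ b
def ints : ℕ → List ℤ
  | 0 => [0]
  | b+1 => -(b+1 : ℤ) :: ((b+1 : ℤ) :: ints b)

lemma mem_ints : ∀ (b : ℕ) (x : ℤ), x.natAbs ≤ b → x ∈ ints b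
  | 0, x, h => by
      have hx : x = 0 := by omega
      simp [ints, hx]
  | b+1, x, h => by
      rcases Nat.lt_or_ge x.natAbs (b+1) with h' | h'
      · simp only [ints, List.mem_cons]
        exact Or.inr (Or.inr (mem_ints b x (by omega)))
      · have hx : x = ((b:ℤ)+1) ∨ x = -((b:ℤ)+1) := by omega
        rcases hx with rfl | rfl <;> simp [ints]

lemma natAbs_le_of_mem_ints : ∀ (b : ℕ) (x : ℤ), x ∈ ints b → x.natAbs ≤ b
  | 0, x, h => by
      simp [ints] at h
      simp [h]
  | b+1, x, h => by
      simp only [ints, List.mem_cons] at h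
      rcases h with rfl | rfl | h
      · omega
      · omega
      · have := natAbs_le_of_mem_ints b x h
        omega

-- Enumeration of integer tuples with given length and ℓ¹-norm bound
def tuples : ℕ → ℕ → List (List ℤ)
  | 0, _ => [[]]
  | n+1, b => (ints b).flatMap fun x => (tuples n (b - x.natAbs)).map (x :: ·)

lemma mem_tuples : ∀ (l : List ℤ) (b : ℕ), (l.map Int.natAbs).sum ≤ b → l ∈ tuples l.length b := by
  intro l
  induction l with
  | nil => intro b _; simp [tuples]
  | cons x t ih =>
    intro b hb
    simp only [List.map_cons, List.sum_cons] at hb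
    simp only [List.length_cons, tuples, List.mem_flatMap]
    refine ⟨x, mem_ints b x (by omega), ?_⟩
    simp only [List.mem_map]
    exact ⟨t, ih _ (by omega), rfl⟩

lemma length_of_mem_tuples : ∀ (n b : ℕ) (l : List ℤ), l ∈ tuples n b → l.length = n
  | 0, b, l, h => by simp only [tuples, List.mem_singleton] at h; simp [h]
  | n+1, b, l, h => by
      simp only [tuples, List.mem_flatMap, List.mem_map] at h
      obtain ⟨x, -, t, ht, rfl⟩ := h
      simp [length_of_mem_tuples n _ t ht]

def toMat (l : List ℤ) : Matrix (Fin 3) (Fin 3) ℤ :=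
  Matrix.of ![![l[0]!, l[1]!, l[2]!], ![l[3]!, l[4]!, l[5]!], ![l[6]!, l[7]!, l[8]!]]

def fdet (l : List ℤ) (z : ℤ) : ℤ :=
  match l with
  | [a,b,c,d,e,f,g,h,i] =>
      (z-a)*((z-e)*(z-i) - f*h) - (-b)*((-d)*(z-i) - (-f)*(-g)) + (-c)*((-d)*(-h) - (z-e)*(-g))
  | _ => 0

def q (l : List ℤ) : Bool :=
  ((l.map Int.natAbs).sum == 4) && ((ints (fdet l 0).natAbs).all fun z => fdet l z != 0)

lemma fdet_eq (l : List ℤ) (hl : l.length = 9) (z : ℤ) :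
    fdet l z = det3 (Matrix.scalar (Fin 3) z - toMat l) := by
  match l, hl with
  | [a,b,c,d,e,f,g,h,i], _ =>
    simp only [fdet, det3, toMat, Matrix.sub_apply, Matrix.scalar_apply, Matrix.diagonal_apply,
      Matrix.of_apply]
    norm_num [Matrix.cons_val_zero, Matrix.cons_val_one, Matrix.cons_val_two, Matrix.head_cons,
      Matrix.tail_cons, Fin.ext_iff]
    ring

lemma norm_toMat (l : List ℤ) (hl : l.length = 9) :
    matNorm3 (toMat l) = ((l.map Int.natAbs).sum : ℤ) := by
  match l, hl with
  | [a,b,c,d,e,f,g,h,i], _ =>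
    simp only [matNorm3, Fin.sum_univ_three, toMat, Matrix.of_apply]
    simp only [Matrix.cons_val_zero, Matrix.cons_val_one, Matrix.head_cons, Matrix.cons_val_two,
      Matrix.tail_cons, List.map_cons, List.map_nil, List.sum_cons, List.sum_nil, add_zero,
      List.getElem!_cons_zero, List.getElem!_cons_succ]
    simp only [Int.abs_eq_natAbs]
    push_cast
    ring

lemma q_iff (l : List ℤ) (hl : l.length = 9) : q l = true ↔ Q (toMat l) := by
  rw [q, Bool.and_eq_true, beq_iff_eq, List.all_eq_true]
  unfold Q
  rw [norm_toMat l hl]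
  constructor
  · rintro ⟨h1, h2⟩
    refine ⟨by exact_mod_cast h1, fun z hz => ?_⟩
    have := h2 z (mem_ints _ z (by rwa [fdet_eq l hl 0] ))
    rw [← fdet_eq l hl z]
    simpa using this
  · rintro ⟨h1, h2⟩
    refine ⟨by exact_mod_cast h1, fun z hz => ?_⟩
    have hz' := natAbs_le_of_mem_ints _ z hz
    rw [fdet_eq l hl 0] at hz'
    have := h2 z hz'
    rw [← fdet_eq l hl z] at this
    simpa using this

def ML : List (Matrix (Fin 3) (Fin 3) ℤ) := ((tuples 9 4).filter q).map toMat

lemma nodup_ints : ∀ b : ℕ, (ints b).Nodup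
  | 0 => by simp [ints]
  | b+1 => by
      have ih := nodup_ints b
      simp only [ints, List.nodup_cons, List.mem_cons]
      refine ⟨?_, ?_, ih⟩
      · rintro (h | h)
        · omega
        · have := natAbs_le_of_mem_ints b _ h; omega
      · intro h
        have := natAbs_le_of_mem_ints b _ h; omega

lemma nodup_tuples : ∀ (n b : ℕ), (tuples n b).Nodup
  | 0, b => by simp [tuples]
  | n+1, b => by
      rw [tuples, List.nodup_flatMap]
      refine ⟨fun x _ => (nodup_tuples n _).map (fun l₁ l₂ h => by injection h), ?_⟩
      refine (nodup_ints b).imp ?_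
      intro x y hxy
      simp only [Function.onFun, List.disjoint_left]
      rintro l hl hr
      simp only [List.mem_map] at hl hr
      obtain ⟨t1, -, rfl⟩ := hl
      obtain ⟨t2, -, h2⟩ := hr
      exact hxy (by injection h2.symm)

lemma toMat_inj (l₁ l₂ : List ℤ) (h1 : l₁.length = 9) (h2 : l₂.length = 9)
    (h : toMat l₁ = toMat l₂) : l₁ = l₂ := by
  match l₁, l₂, h1, h2 with
  | [a,b,c,d,e,f,g,h',i], [a',b',c',d',e',f',g',h'',i'], _, _ =>
    have e00 := congrFun (congrFun h 0) 0
    have e01 := congrFun (congrFun h 0) 1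
    have e02 := congrFun (congrFun h 0) 2
    have e10 := congrFun (congrFun h 1) 0
    have e11 := congrFun (congrFun h 1) 1
    have e12 := congrFun (congrFun h 1) 2
    have e20 := congrFun (congrFun h 2) 0
    have e21 := congrFun (congrFun h 2) 1
    have e22 := congrFun (congrFun h 2) 2
    simp only [toMat, Matrix.of_apply, Matrix.cons_val_zero, Matrix.cons_val_one,
      Matrix.head_cons, Matrix.cons_val_two, Matrix.tail_cons] at e00 e01 e02 e10 e11 e12 e20 e21 e22
    simp_all

lemma nodup_ML : ML.Nodup := by
  refine List.Nodup.map_on ?_ ((nodup_tuples 9 4).filter q)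
  intro x hx y hy hxy
  rw [List.mem_filter] at hx hy
  exact toMat_inj x y (length_of_mem_tuples 9 4 x hx.1) (length_of_mem_tuples 9 4 y hy.1) hxy

lemma set_eq : {A : Matrix (Fin 3) (Fin 3) ℤ |
      Irreducible (A.charpoly.map (Int.castRingHom ℚ)) ∧ matNorm3 A = 4} = ↑ML.toFinset := by
  ext A
  simp only [Set.mem_setOf_eq, List.coe_toFinset, Set.mem_setOf_eq, ML, List.mem_map,
    List.mem_filter]
  rw [← Q_iff]
  constructor
  · intro hQ
    set l : List ℤ := [A 0 0, A 0 1, A 0 2, A 1 0, A 1 1, A 1 2, A 2 0, A 2 1, A 2 2] with hldef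
    have hml : toMat l = A := by
      ext i j
      fin_cases i <;> fin_cases j <;> simp [toMat, hldef]
    have hsum : (l.map Int.natAbs).sum ≤ 4 := by
      have h4 := hQ.1
      unfold matNorm3 at h4
      rw [Fin.sum_univ_three] at h4
      simp only [Fin.sum_univ_three] at h4
      simp only [Int.abs_eq_natAbs] at h4
      simp only [hldef, List.map_cons, List.map_nil, List.sum_cons, List.sum_nil, add_zero]
      omega
    refine ⟨l, ⟨mem_tuples l 4 hsum, ?_⟩, hml⟩
    rw [q_iff l rfl, hml]
    exact hQ
  · rintro ⟨l, ⟨hmem, hq⟩, rfl⟩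
    exact (q_iff l (length_of_mem_tuples 9 4 l hmem)).mp hq

set_option maxRecDepth 40000 in
set_option maxHeartbeats 4000000 in
/-- The number of 3×3 integer matrices with characteristic polynomial irreducible over ℚ
and norm equal to 4 is exactly 240. -/
theorem count_irreducible_matrices_of_norm_4 :
    {A : Matrix (Fin 3) (Fin 3) ℤ |
      Irreducible (A.charpoly.map (Int.castRingHom ℚ)) ∧ matNorm3 A = 4}.ncard = 240 := by
  rw [set_eq, Set.ncard_coe_finset, List.toFinset_card_of_nodup nodup_ML]
  show (((tuples 9 4).filter q).map toMat).length = 240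
  rw [List.length_map]
  decide
end

section
/- Every hyperbolic matrix in M(3,ℤ) (i.e., every 3×3 integer matrix with irreducible characteristic polynomial over ℚ all of whose eigenvalues are real and distinct) has norm at least five, and there exists such a matrix of norm exactly five. -/
open Polynomial

/-- A 3×3 integer matrix is hyperbolic if its characteristic polynomial has three
distinct real roots. -/
def IsHyperbolic3 (A : Matrix (Fin 3) (Fin 3) ℤ) : Prop :=
  ∃ r₁ r₂ r₃ : ℝ, r₁ ≠ r₂ ∧ r₁ ≠ r₃ ∧ r₂ ≠ r₃ ∧
    A.charpoly.map (Int.castRingHom ℝ)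
      = (Polynomial.X - Polynomial.C r₁) * (Polynomial.X - Polynomial.C r₂)
        * (Polynomial.X - Polynomial.C r₃)

/-- Explicit formula for the characteristic polynomial of a 3×3 integer matrix. -/
lemma charpoly3 (A : Matrix (Fin 3) (Fin 3) ℤ) :
    A.charpoly = X^3 - C (A 0 0 + A 1 1 + A 2 2) * X^2
      + C (A 0 0*A 1 1 - A 0 1*A 1 0 + A 0 0*A 2 2 - A 0 2*A 2 0 + A 1 1*A 2 2 - A 1 2*A 2 1) * X
      - C (A 0 0*(A 1 1*A 2 2 - A 1 2*A 2 1) - A 0 1*(A 1 0*A 2 2 - A 1 2*A 2 0)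
          + A 0 2*(A 1 0*A 2 1 - A 1 1*A 2 0)) := by
  rw [Matrix.charpoly, Matrix.det_fin_three]
  simp only [Matrix.charmatrix_apply, Matrix.diagonal_apply, Matrix.diagonal_apply_eq,
    show ((0:Fin 3) = 1) = False by simp, show ((0:Fin 3) = 2) = False by simp,
    show ((1:Fin 3) = 0) = False by simp, show ((1:Fin 3) = 2) = False by simp,
    show ((2:Fin 3) = 0) = False by simp, show ((2:Fin 3) = 1) = False by simp,
    if_true, if_false, map_add, map_mul, map_sub]
  ring

/-- The discriminant of the cubic `X^3 - t X^2 + e X - d`. -/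
def disc3 (t e d : ℤ) : ℤ := 18*t*e*d - 4*t^3*d + t^2*e^2 - 4*e^3 - 27*d^2

set_option maxRecDepth 100000 in
set_option maxHeartbeats 4000000 in
/-- Finite check: for every integer matrix of norm at most 4 (entries `a … i`),
either the discriminant of the characteristic polynomial is non-positive or the
characteristic polynomial has an integer root. -/
lemma keyCheck : ∀ a ∈ Finset.Icc (-4:ℤ) 4, ∀ b ∈ Finset.Icc (-(4-|a|)) (4-|a|),
    ∀ c ∈ Finset.Icc (-(4-|a|-|b|)) (4-|a|-|b|),
    ∀ d ∈ Finset.Icc (-(4-|a|-|b|-|c|)) (4-|a|-|b|-|c|),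
    ∀ e ∈ Finset.Icc (-(4-|a|-|b|-|c|-|d|)) (4-|a|-|b|-|c|-|d|),
    ∀ f ∈ Finset.Icc (-(4-|a|-|b|-|c|-|d|-|e|)) (4-|a|-|b|-|c|-|d|-|e|),
    ∀ g ∈ Finset.Icc (-(4-|a|-|b|-|c|-|d|-|e|-|f|)) (4-|a|-|b|-|c|-|d|-|e|-|f|),
    ∀ h ∈ Finset.Icc (-(4-|a|-|b|-|c|-|d|-|e|-|f|-|g|)) (4-|a|-|b|-|c|-|d|-|e|-|f|-|g|),
    ∀ i ∈ Finset.Icc (-(4-|a|-|b|-|c|-|d|-|e|-|f|-|g|-|h|)) (4-|a|-|b|-|c|-|d|-|e|-|f|-|g|-|h|),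
    disc3 (a+e+i) (a*e - b*d + a*i - c*g + e*i - f*h)
      (a*(e*i - f*h) - b*(d*i - f*g) + c*(d*h - e*g)) ≤ 0 ∨
    ∃ r ∈ Finset.Icc (-4:ℤ) 4,
      r^3 - (a+e+i)*r^2 + (a*e - b*d + a*i - c*g + e*i - f*h)*r
        - (a*(e*i - f*h) - b*(d*i - f*g) + c*(d*h - e*g)) = 0 := by
  decide

lemma memIcc {x y : ℤ} (h : |x| ≤ y) : x ∈ Finset.Icc (-y) y := by
  rw [Finset.mem_Icc]
  constructor
  · linarith [neg_abs_le x]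
  · linarith [le_abs_self x]

section Example
def Aex : Matrix (Fin 3) (Fin 3) ℤ := Matrix.of ![![-1,-1,0],![-1,0,-1],![0,-1,0]]

lemma hcp : Aex.charpoly = X^3 + X^2 - C 2 * X - C 1 := by
  rw [charpoly3]
  norm_num [Aex, Matrix.of_apply, Matrix.cons_val_zero, Matrix.cons_val_one, Matrix.head_cons,
    Matrix.cons_val_two, Matrix.tail_cons]
  ring

lemma hnorm5 : matNorm3 Aex = 5 := by decide

lemma hirrZ : Irreducible Aex.charpoly := by
  have hmonic := Aex.charpoly_monic
  have hdeg : Aex.charpoly.natDegree = 3 := by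
    rw [Aex.charpoly_natDegree_eq_dim, Fintype.card_fin]
  rw [hmonic.irreducible_iff_roots_eq_zero_of_degree_le_three (by omega) (by omega)]
  rw [Multiset.eq_zero_iff_forall_notMem]
  intro r hr
  rw [Polynomial.mem_roots hmonic.ne_zero] at hr
  have hev : Polynomial.eval r Aex.charpoly = 0 := hr
  rw [hcp] at hev
  simp only [eval_sub, eval_add, eval_mul, eval_pow, eval_X, eval_C] at hev
  have hu : r * (r^2 + r - 2) = 1 := by ring_nf; ring_nf at hev; linarith
  rcases Int.isUnit_iff.mp (IsUnit.of_mul_eq_one _ hu) with rfl | rfl <;> norm_num at hu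

lemma hirrQ : Irreducible (Aex.charpoly.map (Int.castRingHom ℚ)) :=
  (Polynomial.IsPrimitive.Int.irreducible_iff_irreducible_map_cast
    (Aex.charpoly_monic.isPrimitive)).mp hirrZ

lemma hyp : ∃ r₁ r₂ r₃ : ℝ, r₁ ≠ r₂ ∧ r₁ ≠ r₃ ∧ r₂ ≠ r₃ ∧
    Aex.charpoly.map (Int.castRingHom ℝ)
      = (X - C r₁) * (X - C r₂) * (X - C r₃) := by
  set q : Polynomial ℝ := Aex.charpoly.map (Int.castRingHom ℝ) with hqdef
  have hq : q = X^3 + X^2 - 2 * X - 1 := by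
    rw [hqdef, hcp]
    simp only [Polynomial.map_sub, Polynomial.map_add, Polynomial.map_pow, Polynomial.map_mul,
      Polynomial.map_X, Polynomial.map_C, map_ofNat, map_one, eq_intCast]
    norm_num
  have hqm : q.Monic := Aex.charpoly_monic.map _
  have hqdeg : q.natDegree = 3 := by
    rw [hqdef, Aex.charpoly_monic.natDegree_map, Aex.charpoly_natDegree_eq_dim, Fintype.card_fin]
  set f : ℝ → ℝ := fun x => x^3 + x^2 - 2*x - 1 with hf
  have hcont : ∀ a b : ℝ, ContinuousOn f (Set.Icc a b) := by
    intro a b; apply Continuous.continuousOn; rw [hf]; continuity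
  obtain ⟨r₁, hI₁, hr₁⟩ := intermediate_value_Ioo (by norm_num : (-2:ℝ) ≤ -1)
    (hcont (-2) (-1)) (by norm_num [hf] : (0:ℝ) ∈ Set.Ioo (f (-2)) (f (-1)))
  obtain ⟨r₂, hI₂, hr₂⟩ := intermediate_value_Ioo' (by norm_num : (-1:ℝ) ≤ 0)
    (hcont (-1) 0) (by norm_num [hf] : (0:ℝ) ∈ Set.Ioo (f 0) (f (-1)))
  obtain ⟨r₃, hI₃, hr₃⟩ := intermediate_value_Ioo (by norm_num : (1:ℝ) ≤ 2)
    (hcont 1 2) (by norm_num [hf] : (0:ℝ) ∈ Set.Ioo (f 1) (f 2))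
  obtain ⟨hI₁l, hI₁r⟩ := hI₁; obtain ⟨hI₂l, hI₂r⟩ := hI₂; obtain ⟨hI₃l, hI₃r⟩ := hI₃
  have h12 : r₁ ≠ r₂ := by intro h; rw [h] at hI₁r; linarith
  have h13 : r₁ ≠ r₃ := by intro h; rw [h] at hI₁r; linarith
  have h23 : r₂ ≠ r₃ := by intro h; rw [h] at hI₂r; linarith
  have hroot : ∀ x : ℝ, f x = 0 → x ∈ q.roots := by
    intro x hx
    rw [Polynomial.mem_roots hqm.ne_zero]
    show Polynomial.eval x q = 0
    rw [hq]
    have hx' : x^3 + x^2 - 2*x - 1 = 0 := hx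
    simp only [eval_sub, eval_add, eval_mul, eval_pow, eval_X, eval_ofNat, eval_one]
    linarith
  have hle : ({r₁, r₂, r₃} : Multiset ℝ) ≤ q.roots := by
    rw [Multiset.le_iff_subset (by simp [Multiset.nodup_cons, h12, h13, h23])]
    intro x hx
    simp only [Multiset.insert_eq_cons, Multiset.mem_cons, Multiset.mem_singleton] at hx
    rcases hx with rfl | rfl | rfl
    exacts [hroot _ hr₁, hroot _ hr₂, hroot _ hr₃]
  have hcard : q.roots.card = 3 := by
    refine le_antisymm (le_trans (Polynomial.card_roots' q) (le_of_eq hqdeg)) ?_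
    have := Multiset.card_le_card hle
    simpa using this
  have heq : q.roots = {r₁, r₂, r₃} :=
    (Multiset.eq_of_le_of_card_le hle (by rw [hcard]; simp)).symm
  have hprod := Polynomial.prod_multiset_X_sub_C_of_monic_of_roots_card_eq hqm
    (hcard.trans hqdeg.symm)
  rw [heq] at hprod
  refine ⟨r₁, r₂, r₃, h12, h13, h23, ?_⟩
  rw [← hprod]
  simp only [Multiset.insert_eq_cons, Multiset.map_cons, Multiset.map_singleton,
    Multiset.prod_cons, Multiset.prod_singleton]
  ring
end Example

/-- Every hyperbolic 3×3 integer matrix with characteristic polynomial irreducible over ℚ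
has norm at least five, and there is such a matrix of norm exactly five. -/
theorem hyperbolic_norm_at_least_five :
    (∀ A : Matrix (Fin 3) (Fin 3) ℤ,
      Irreducible (A.charpoly.map (Int.castRingHom ℚ)) → IsHyperbolic3 A → 5 ≤ matNorm3 A) ∧
    (∃ A : Matrix (Fin 3) (Fin 3) ℤ,
      Irreducible (A.charpoly.map (Int.castRingHom ℚ)) ∧ IsHyperbolic3 A ∧ matNorm3 A = 5) := by
  constructor
  · -- lower bound
    intro A hirr hhyp
    by_contra hlt
    push_neg at hlt
    have hnorm : |A 0 0| + |A 0 1| + |A 0 2| + |A 1 0| + |A 1 1| + |A 1 2|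
        + |A 2 0| + |A 2 1| + |A 2 2| ≤ 4 := by
      have h5 : matNorm3 A ≤ 4 := by omega
      simp only [matNorm3, Fin.sum_univ_three] at h5
      linarith
    have n00 := abs_nonneg (A 0 0); have n01 := abs_nonneg (A 0 1)
    have n02 := abs_nonneg (A 0 2); have n10 := abs_nonneg (A 1 0)
    have n11 := abs_nonneg (A 1 1); have n12 := abs_nonneg (A 1 2)
    have n20 := abs_nonneg (A 2 0); have n21 := abs_nonneg (A 2 1)
    have n22 := abs_nonneg (A 2 2)
    have key := keyCheck (A 0 0) (memIcc (by linarith)) (A 0 1) (memIcc (by linarith))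
      (A 0 2) (memIcc (by linarith)) (A 1 0) (memIcc (by linarith))
      (A 1 1) (memIcc (by linarith)) (A 1 2) (memIcc (by linarith))
      (A 2 0) (memIcc (by linarith)) (A 2 1) (memIcc (by linarith))
      (A 2 2) (memIcc (by linarith))
    set t : ℤ := A 0 0 + A 1 1 + A 2 2 with ht
    set e : ℤ := A 0 0*A 1 1 - A 0 1*A 1 0 + A 0 0*A 2 2 - A 0 2*A 2 0
        + A 1 1*A 2 2 - A 1 2*A 2 1 with he
    set d : ℤ := A 0 0*(A 1 1*A 2 2 - A 1 2*A 2 1) - A 0 1*(A 1 0*A 2 2 - A 1 2*A 2 0)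
        + A 0 2*(A 1 0*A 2 1 - A 1 1*A 2 0) with hd
    rcases key with hdisc | ⟨r, _, hroot⟩
    · -- discriminant ≤ 0 contradicts hyperbolicity
      obtain ⟨r₁, r₂, r₃, h12, h13, h23, hfac⟩ := hhyp
      rw [charpoly3 A, ← ht, ← he, ← hd] at hfac
      simp only [Polynomial.map_sub, Polynomial.map_add, Polynomial.map_mul,
        Polynomial.map_pow, Polynomial.map_X, Polynomial.map_C] at hfac
      have hrhs : (X - C r₁) * (X - C r₂) * (X - C r₃)
          = X^3 - C (r₁+r₂+r₃) * X^2 + C (r₁*r₂+r₁*r₃+r₂*r₃) * X - C (r₁*r₂*r₃) := by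
        simp only [C_add, C_mul]; ring
      rw [hrhs] at hfac
      have c2 := congrArg (fun p => Polynomial.coeff p 2) hfac
      have c1 := congrArg (fun p => Polynomial.coeff p 1) hfac
      have c0 := congrArg (fun p => Polynomial.coeff p 0) hfac
      simp only [coeff_sub, coeff_add, coeff_C_mul, coeff_X_pow, coeff_C, coeff_X,
        eq_intCast, Int.cast_id] at c2 c1 c0
      norm_num at c2 c1 c0
      -- c2 : (t:ℝ) = r₁+r₂+r₃, etc.
      have ht' : (t : ℝ) = r₁+r₂+r₃ := by linarith
      have he' : (e : ℝ) = r₁*r₂+r₁*r₃+r₂*r₃ := by linarith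
      have hd' : (d : ℝ) = r₁*r₂*r₃ := by linarith
      have hdiscR : ((disc3 t e d : ℤ) : ℝ) = ((r₁-r₂)*(r₁-r₃)*(r₂-r₃))^2 := by
        show ((18*t*e*d - 4*t^3*d + t^2*e^2 - 4*e^3 - 27*d^2 : ℤ) : ℝ) = _
        push_cast
        rw [ht', he', hd']; ring
      have hne : (r₁-r₂)*(r₁-r₃)*(r₂-r₃) ≠ 0 :=
        mul_ne_zero (mul_ne_zero (sub_ne_zero.mpr h12) (sub_ne_zero.mpr h13))
          (sub_ne_zero.mpr h23)
      have hpos : (0:ℝ) < ((r₁-r₂)*(r₁-r₃)*(r₂-r₃))^2 := by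
        have := pow_pos (abs_pos.mpr hne) 2
        rwa [sq_abs] at this
      have hcast : ((disc3 t e d : ℤ) : ℝ) ≤ 0 := by exact_mod_cast hdisc
      linarith
    · -- integer root contradicts irreducibility
      have hmap0 : A.charpoly.map (Int.castRingHom ℚ) ≠ 0 :=
        ((A.charpoly_monic).map _).ne_zero
      have hdeg : (A.charpoly.map (Int.castRingHom ℚ)).natDegree = 3 := by
        rw [(A.charpoly_monic).natDegree_map, A.charpoly_natDegree_eq_dim, Fintype.card_fin]
      have hri : (A.charpoly.map (Int.castRingHom ℚ)).roots = 0 :=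
        (Polynomial.irreducible_iff_roots_eq_zero_of_degree_le_three
          (by omega) (by omega)).mp hirr
      have hmem : (r : ℚ) ∈ (A.charpoly.map (Int.castRingHom ℚ)).roots := by
        rw [Polynomial.mem_roots hmap0]
        show Polynomial.eval (r:ℚ) _ = 0
        rw [charpoly3 A, ← ht, ← he, ← hd]
        simp only [Polynomial.map_sub, Polynomial.map_add, Polynomial.map_mul,
          Polynomial.map_pow, Polynomial.map_X, Polynomial.map_C, eval_sub, eval_add,
          eval_mul, eval_pow, eval_X, eval_C, Int.coe_castRingHom]
        exact_mod_cast congrArg (fun z : ℤ => (z : ℚ)) hroot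
      rw [hri] at hmem
      simp at hmem
  · -- the example
    exact ⟨Aex, hirrQ, hyp, hnorm5⟩
end
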